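/- If a·m_0 + g_s + b·m_n = a'·m_0 + g_t + c·m_n with a, a' ∈ ℕ₀ and (s,b), (t,c) ∈ V∖W, then a = a', s = t, and b = c. -/

import Mathlib

/-- For `t ≥ 1`, the quotient `q_t` in the division `t = q_t·p + r_t` with `r_t ∈ [1,p]`. -/
def qF (p t : ℕ) : ℕ := (t - 1) / p

/-- For `t ≥ 1`, the remainder `r_t ∈ [1,p]` in the division `t = q_t·p + r_t`. -/
def rF (p t : ℕ) : ℕ := (t - 1) % p + 1

/-- `g_t = q_t·m_p + m_{r_t}` for `t ≥ 1`, and `g_0 = 0`. -/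
def gF (p : ℕ) (m : ℕ → ℕ) (t : ℕ) : ℕ :=
  if t = 0 then 0 else qF p t * m p + m (rF p t)

/-- The set of non-negative integer combinations `Σ_{i=0}^{k} a_i·m_i`. -/
def gammaGen (k : ℕ) (m : ℕ → ℕ) : Set ℕ :=
  {x | ∃ a : ℕ → ℕ, x = ∑ i ∈ Finset.range (k + 1), a i * m i}

namespace Stmt3Aux

lemma mem_add {k : ℕ} {m : ℕ → ℕ} {x y : ℕ} (hx : x ∈ gammaGen k m)
    (hy : y ∈ gammaGen k m) : x + y ∈ gammaGen k m := by
  obtain ⟨A, hA⟩ := hx; obtain ⟨B, hB⟩ := hy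
  exact ⟨fun i => A i + B i, by simp [hA, hB, add_mul, Finset.sum_add_distrib]⟩

lemma mem_single {k i : ℕ} (m : ℕ → ℕ) (co : ℕ) (hi : i ≤ k) :
    co * m i ∈ gammaGen k m := by
  refine ⟨fun j => if j = i then co else 0, ?_⟩
  simp [ite_mul, Finset.sum_ite_eq', Finset.mem_range, Nat.lt_succ_iff, hi]

lemma mem_zero {k : ℕ} (m : ℕ → ℕ) : 0 ∈ gammaGen k m := ⟨fun _ => 0, by simp⟩

lemma mem_mono {k k' : ℕ} (h : k ≤ k') {m : ℕ → ℕ} {x : ℕ}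
    (hx : x ∈ gammaGen k m) : x ∈ gammaGen k' m := by
  obtain ⟨A, hA⟩ := hx
  refine ⟨fun i => if i < k + 1 then A i else 0, ?_⟩
  rw [hA]
  have hsub : Finset.range (k+1) ⊆ Finset.range (k'+1) := Finset.range_subset_range.mpr (by omega)
  rw [← Finset.sum_subset hsub (fun i _ hi => by simp [Finset.mem_range.not.mp hi])]
  apply Finset.sum_congr rfl
  intro i hi
  simp [Finset.mem_range.mp hi]

def Qc (p t : ℕ) : ℕ := (t + p - 1) / p

lemma Q_le_iff {p : ℕ} (hp : 0 < p) (t k : ℕ) : Qc p t ≤ k ↔ t ≤ p * k := by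
  unfold Qc
  rw [Nat.div_le_iff_le_mul_add_pred hp]
  generalize p * k = X
  omega

lemma QB1 {p : ℕ} (hp : 0 < p) (t : ℕ) : t ≤ p * Qc p t :=
  (Q_le_iff hp t _).mp le_rfl

lemma QB2 {p : ℕ} (hp : 0 < p) (t : ℕ) : p * Qc p t < t + p := by
  have h : Qc p t * p ≤ t + p - 1 := Nat.div_mul_le_self _ _
  rw [mul_comm] at h
  generalize p * Qc p t = X at h ⊢
  omega

lemma Qmono {p : ℕ} (hp : 0 < p) {s t : ℕ} (h : s ≤ t) : Qc p s ≤ Qc p t :=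
  (Q_le_iff hp s _).mpr (le_trans h (QB1 hp t))

lemma Qadd {p : ℕ} (hp : 0 < p) (σ τ : ℕ) :
    Qc p σ + Qc p τ = Qc p (σ + τ) ∨ Qc p σ + Qc p τ = Qc p (σ + τ) + 1 := by
  have h1 : Qc p (σ + τ) ≤ Qc p σ + Qc p τ := by
    refine (Q_le_iff hp _ _).mpr ?_
    rw [mul_add]
    exact add_le_add (QB1 hp σ) (QB1 hp τ)
  have h2 : Qc p σ + Qc p τ ≤ Qc p (σ + τ) + 1 := by
    by_contra hcon
    push_neg at hcon
    have hb1 : σ + τ ≤ p * Qc p (σ + τ) := QB1 hp _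
    have hb2 : p * Qc p σ < σ + p := QB2 hp σ
    have hb3 : p * Qc p τ < τ + p := QB2 hp τ
    have hmul : p * (Qc p (σ + τ) + 2) ≤ p * (Qc p σ + Qc p τ) :=
      Nat.mul_le_mul_left p (by omega)
    rw [mul_add, mul_add, mul_two] at hmul
    linarith
  omega

lemma gF_eq {p : ℕ} (hp : 0 < p) {m : ℕ → ℕ} {c : ℕ}
    (harith : ∀ i ≤ p, m i = m 0 + i * c) (t : ℕ) :
    gF p m t = Qc p t * m 0 + t * c := by
  cases t with
  | zero =>
      simp only [gF, Qc, if_pos rfl, Nat.zero_mul, Nat.zero_add, Nat.add_zero]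
      rw [Nat.div_eq_of_lt (by omega : p - 1 < p)]
      simp
  | succ k =>
      have hkp : k % p < p := Nat.mod_lt k hp
      simp only [gF, qF, rF, Nat.succ_sub_one, if_neg (Nat.succ_ne_zero k)]
      rw [harith p le_rfl, harith (k % p + 1) (by omega)]
      have hq : Qc p (k+1) = k / p + 1 := by
        unfold Qc
        have h0 : k + 1 + p - 1 = k + p := by omega
        rw [h0, Nat.add_div_right k hp]
      rw [hq]
      have hdm : p * (k / p) + k % p = k := Nat.div_add_mod k p
      have h2 : p * (k / p) * c + k % p * c = k * c := by rw [← add_mul, hdm]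
      ring_nf
      ring_nf at h2
      linarith

lemma gadd {p : ℕ} (hp : 0 < p) {m : ℕ → ℕ} {c : ℕ}
    (harith : ∀ i ≤ p, m i = m 0 + i * c) (σ τ : ℕ) :
    gF p m σ + gF p m τ = gF p m (σ + τ) ∨
      gF p m σ + gF p m τ = gF p m (σ + τ) + m 0 := by
  rw [gF_eq hp harith, gF_eq hp harith, gF_eq hp harith]
  rcases Qadd hp σ τ with h | h
  · left
    calc Qc p σ * m 0 + σ * c + (Qc p τ * m 0 + τ * c)
        = (Qc p σ + Qc p τ) * m 0 + (σ + τ) * c := by ring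
      _ = Qc p (σ + τ) * m 0 + (σ + τ) * c := by rw [h]
  · right
    calc Qc p σ * m 0 + σ * c + (Qc p τ * m 0 + τ * c)
        = (Qc p σ + Qc p τ) * m 0 + (σ + τ) * c := by ring
      _ = (Qc p (σ + τ) + 1) * m 0 + (σ + τ) * c := by rw [h]
      _ = Qc p (σ + τ) * m 0 + (σ + τ) * c + m 0 := by ring

lemma gmono {p : ℕ} (hp : 0 < p) {m : ℕ → ℕ} {c : ℕ} (hc : 1 ≤ c)
    (harith : ∀ i ≤ p, m i = m 0 + i * c) {s t : ℕ} (h : s < t) :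
    gF p m s < gF p m t := by
  rw [gF_eq hp harith, gF_eq hp harith]
  have h1 : Qc p s * m 0 ≤ Qc p t * m 0 :=
    Nat.mul_le_mul_right _ (Qmono hp h.le)
  have h2 : s * c < t * c := Nat.mul_lt_mul_of_lt_of_le h le_rfl (by omega)
  omega

set_option maxHeartbeats 2000000 in
theorem main
    (p n : ℕ) (hp : 1 ≤ p) (hn : n = p + 1)
    (m : ℕ → ℕ) (c : ℕ) (hc : 1 ≤ c) (hm0 : 0 < m 0)
    (harith : ∀ i ≤ p, m i = m 0 + i * c) (hmn : 0 < m n)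
    (S : Set ℕ)
    (hS : S = {γ | γ ∈ gammaGen n m ∧ ∀ δ ∈ gammaGen n m, δ + m 0 ≠ γ})
    (u : ℕ) (hu : IsLeast {t : ℕ | gF p m t ∉ S} u)
    (v : ℕ) (hv : IsLeast {b : ℕ | 1 ≤ b ∧ b * m n ∈ gammaGen p m} v)
    (lam w mu z : ℕ) (hlam : 1 ≤ lam) (hw : w < v) (hz : z < u)
    (hgu : gF p m u = lam * m 0 + w * m n)
    (hvmn : v * m n = mu * m 0 + gF p m z)
    (V W : Set (ℕ × ℕ))
    (hV : V = {sb | sb.1 < u ∧ sb.2 < v})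
    (hW : W = {sb | u - z ≤ sb.1 ∧ sb.1 < u ∧ v - w ≤ sb.2 ∧ sb.2 < v})
    (a a' s t b c' : ℕ)
    (hsb : (s, b) ∈ V \ W) (htc : (t, c') ∈ V \ W)
    (heq : a * m 0 + gF p m s + b * m n = a' * m 0 + gF p m t + c' * m n)
    (hbc : c' ≤ b) :
    a = a' ∧ s = t ∧ b = c' := by
  subst hn hS hV hW
  have hp0 : 0 < p := hp
  -- memberships
  have hgam : ∀ α τ : ℕ, α * m 0 + gF p m τ ∈ gammaGen p m := by
    intro α τ
    refine mem_add (mem_single m α (Nat.zero_le p)) ?_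
    cases τ with
    | zero => simpa [gF] using mem_zero (k := p) m
    | succ k =>
        have hr : (k % p) + 1 ≤ p := by have := Nat.mod_lt k hp0; omega
        simp only [gF, if_neg (Nat.succ_ne_zero k), qF, rF, Nat.succ_sub_one]
        exact mem_add (mem_single m _ le_rfl) (by simpa using mem_single m 1 hr)
  have hsubset : ∀ x ∈ gammaGen p m, x ∈ gammaGen (p+1) m :=
    fun x hx => mem_mono (by omega) hx
  have hEmem : ∀ e : ℕ, e * m (p+1) ∈ gammaGen (p+1) m :=
    fun e => mem_single m e le_rfl
  -- S facts
  have Sprop : ∀ τ, τ < u → ∀ δ ∈ gammaGen (p+1) m, δ + m 0 ≠ gF p m τ := by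
    intro τ hτ δ hδ hcontra
    have h1 : gF p m τ ∈ {γ | γ ∈ gammaGen (p+1) m ∧
        ∀ δ ∈ gammaGen (p+1) m, δ + m 0 ≠ γ} := by
      by_contra h
      exact absurd (hu.2 h) (by omega)
    exact h1.2 δ hδ hcontra
  have vmin : ∀ e, 1 ≤ e → e * m (p+1) ∈ gammaGen p m → v ≤ e :=
    fun e h1 h2 => hv.2 ⟨h1, h2⟩
  -- unpack V, W memberships
  simp only [Set.mem_diff, Set.mem_setOf_eq] at hsb htc
  obtain ⟨⟨hsu, hbv⟩, hsW⟩ := hsb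
  obtain ⟨⟨htu, hcv⟩, htW⟩ := htc
  obtain ⟨d, hd⟩ : ∃ d, b = c' + d := ⟨b - c', by omega⟩
  have heq2 : a * m 0 + gF p m s + d * m (p+1) = a' * m 0 + gF p m t := by
    have hbe : b * m (p+1) = c' * m (p+1) + d * m (p+1) := by rw [hd, add_mul]
    rw [hbe] at heq
    linarith
  by_cases hd0 : d = 0
  · -- d = 0 : b = c'
    subst hd0
    simp only [Nat.zero_mul, Nat.add_zero] at heq2
    rcases Nat.lt_trichotomy s t with hst | hst | hst
    · exfalso
      have hglt := gmono hp0 hc harith hst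
      have haa : a' < a := by
        by_contra hcon
        push_neg at hcon
        have : a * m 0 ≤ a' * m 0 := Nat.mul_le_mul_right _ hcon
        linarith
      obtain ⟨k, hk⟩ : ∃ k, a = a' + (k+1) := ⟨a - a' - 1, by omega⟩
      have hkM : (k+1) * m 0 + gF p m s = gF p m t := by
        rw [hk, add_mul] at heq2; linarith
      refine Sprop t htu (k * m 0 + gF p m s) (hsubset _ (hgam k s)) ?_
      rw [← hkM]; ring
    · subst hst
      have haM : a * m 0 = a' * m 0 := by linarith
      exact ⟨Nat.eq_of_mul_eq_mul_right hm0 haM, rfl, by omega⟩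
    · exfalso
      have hglt := gmono hp0 hc harith hst
      have haa : a < a' := by
        by_contra hcon
        push_neg at hcon
        have : a' * m 0 ≤ a * m 0 := Nat.mul_le_mul_right _ hcon
        linarith
      obtain ⟨k, hk⟩ : ∃ k, a' = a + (k+1) := ⟨a' - a - 1, by omega⟩
      have hkM : (k+1) * m 0 + gF p m t = gF p m s := by
        rw [hk, add_mul] at heq2; linarith
      refine Sprop s hsu (k * m 0 + gF p m t) (hsubset _ (hgam k t)) ?_
      rw [← hkM]; ring
  · -- d ≥ 1
    exfalso
    have hd1 : 1 ≤ d := by omega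
    have hdv : d < v := by omega
    have hEpos : 0 < m (p+1) := hmn
    have hdE : 0 < d * m (p+1) := Nat.mul_pos hd1 hEpos
    rcases le_or_gt s t with hst | hst
    · -- s ≤ t
      obtain ⟨σ, hσ⟩ : ∃ σ, t = s + σ := ⟨t - s, by omega⟩
      subst hσ
      rcases Nat.lt_or_ge a' a with ha | ha
      · obtain ⟨k, hk⟩ : ∃ k, a = a' + (k+1) := ⟨a - a' - 1, by omega⟩
        have hkM : (k+1) * m 0 + gF p m s + d * m (p+1) = gF p m (s+σ) := by
          rw [hk, add_mul] at heq2; linarith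
        refine Sprop (s+σ) htu (k * m 0 + gF p m s + d * m (p+1))
          (mem_add (hsubset _ (hgam k s)) (hEmem d)) ?_
        rw [← hkM]; ring
      · obtain ⟨k, hk⟩ : ∃ k, a' = a + k := ⟨a' - a, by omega⟩
        have hkM : gF p m s + d * m (p+1) = k * m 0 + gF p m (s+σ) := by
          rw [hk, add_mul] at heq2; linarith
        rcases gadd hp0 harith s σ with hg | hg
        · have h3 : d * m (p+1) = k * m 0 + gF p m σ := by linarith
          exact absurd (vmin d hd1 (h3 ▸ hgam k σ)) (by omega)
        · have key : d * m (p+1) + m 0 = k * m 0 + gF p m σ := by linarith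
          rcases Nat.eq_zero_or_pos k with hk0 | hkpos
          · have key2 : d * m (p+1) + m 0 = gF p m σ := by
              rw [hk0] at key; linarith
            exact Sprop σ (by omega) (d * m (p+1)) (hEmem d) key2
          · obtain ⟨j, hj⟩ : ∃ j, k = j + 1 := ⟨k - 1, by omega⟩
            have h3 : d * m (p+1) = j * m 0 + gF p m σ := by
              rw [hj, add_mul, one_mul] at key; linarith
            exact absurd (vmin d hd1 (h3 ▸ hgam j σ)) (by omega)
    · -- t < s
      obtain ⟨σ, hσ⟩ : ∃ σ, s = t + (σ+1) := ⟨s - t - 1, by omega⟩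
      subst hσ
      have hKey : ∃ k, 1 ≤ k ∧ k * m 0 = gF p m (σ+1) + d * m (p+1) := by
        rcases gadd hp0 harith t (σ+1) with hg | hg
        · have hsum : a * m 0 + (gF p m (σ+1) + d * m (p+1)) = a' * m 0 := by
            linarith
          have h1 : a * m 0 < a' * m 0 := by
            have hgpos : 0 < gF p m (σ+1) + d * m (p+1) := by omega
            linarith
          have haa : a < a' := by
            by_contra hcon
            push_neg at hcon
            exact absurd (Nat.mul_le_mul_right (m 0) hcon) (by omega)
          obtain ⟨k, hk⟩ : ∃ k, a' = a + k := ⟨a' - a, by omega⟩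
          refine ⟨k, by omega, ?_⟩
          rw [hk, add_mul] at hsum
          linarith
        · have hsum : a * m 0 + (gF p m (σ+1) + d * m (p+1)) = a' * m 0 + m 0 := by
            linarith
          have h1 : a * m 0 < a' * m 0 + m 0 := by
            have hgpos : 0 < gF p m (σ+1) + d * m (p+1) := by omega
            linarith
          have haa : a < a' + 1 := by
            by_contra hcon
            push_neg at hcon
            have h2 : (a'+1) * m 0 ≤ a * m 0 := Nat.mul_le_mul_right (m 0) hcon
            rw [add_mul, one_mul] at h2
            omega
          obtain ⟨k, hk⟩ : ∃ k, a' + 1 = a + k := ⟨a' + 1 - a, by omega⟩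
          refine ⟨k, by omega, ?_⟩
          have hsum2 : a * m 0 + (gF p m (σ+1) + d * m (p+1)) = (a' + 1) * m 0 := by
            rw [add_mul, one_mul]; linarith
          rw [hk, add_mul] at hsum2
          linarith
      obtain ⟨k, hk1, hkey⟩ := hKey
      -- Claim I : u ≤ σ+1+z
      have claimI : u ≤ (σ+1) + z := by
        by_contra hcon
        push_neg at hcon
        obtain ⟨d', hd'⟩ : ∃ d', v = d + d' := ⟨v - d, by omega⟩
        have hd'1 : 1 ≤ d' := by omega
        have h1 : k * m 0 + d' * m (p+1) = gF p m (σ+1) + mu * m 0 + gF p m z := by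
          have hv' : v * m (p+1) = d * m (p+1) + d' * m (p+1) := by
            rw [hd', add_mul]
          linarith
        have hcomb : ∃ N, k * m 0 + d' * m (p+1) = N * m 0 + gF p m ((σ+1)+z) := by
          rcases gadd hp0 harith (σ+1) z with hg2 | hg2
          · exact ⟨mu, by linarith⟩
          · exact ⟨mu + 1, by rw [add_mul, one_mul]; linarith⟩
        obtain ⟨N, h2⟩ := hcomb
        rcases le_or_gt k N with hkm | hkm
        · obtain ⟨j, hj⟩ : ∃ j, N = k + j := ⟨N - k, by omega⟩
          have h3 : d' * m (p+1) = j * m 0 + gF p m ((σ+1)+z) := by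
            rw [hj, add_mul] at h2; linarith
          exact absurd (vmin d' hd'1 (h3 ▸ hgam j _)) (by omega)
        · obtain ⟨j, hj⟩ : ∃ j, k = N + (j+1) := ⟨k - N - 1, by omega⟩
          have h3 : (j+1) * m 0 + d' * m (p+1) = gF p m ((σ+1)+z) := by
            rw [hj, add_mul] at h2; linarith
          refine Sprop ((σ+1)+z) hcon (j * m 0 + d' * m (p+1))
            (mem_add (mem_single m j (Nat.zero_le _)) (hEmem d')) ?_
          rw [← h3]; ring
      -- Claim II : v ≤ d + w
      have claimII : v ≤ d + w := by
        by_contra hcon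
        push_neg at hcon
        obtain ⟨ρ, hρ⟩ : ∃ ρ, u = (σ+1) + ρ := ⟨u - (σ+1), by omega⟩
        have hgu' : gF p m ((σ+1)+ρ) = lam * m 0 + w * m (p+1) := by
          rw [← hρ]; exact hgu
        have hdw : (d+w) * m (p+1) = d * m (p+1) + w * m (p+1) := by rw [add_mul]
        have hcomb : ∃ L, 1 ≤ L ∧
            k * m 0 + gF p m ρ = L * m 0 + (d+w) * m (p+1) := by
          rcases gadd hp0 harith (σ+1) ρ with hg2 | hg2
          · exact ⟨lam, hlam, by linarith⟩
          · refine ⟨lam + 1, by omega, ?_⟩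
            rw [add_mul, one_mul]
            linarith
        obtain ⟨L, hL1, hLkey⟩ := hcomb
        rcases le_or_gt L k with hLk | hLk
        · obtain ⟨j, hj⟩ : ∃ j, k = L + j := ⟨k - L, by omega⟩
          have h3 : (d+w) * m (p+1) = j * m 0 + gF p m ρ := by
            rw [hj, add_mul] at hLkey; linarith
          exact absurd (vmin (d+w) (by omega) (h3 ▸ hgam j ρ)) (by omega)
        · obtain ⟨j, hj⟩ : ∃ j, L = k + (j+1) := ⟨L - k - 1, by omega⟩
          have h3 : gF p m ρ = (j+1) * m 0 + (d+w) * m (p+1) := by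
            rw [hj, add_mul] at hLkey; linarith
          refine Sprop ρ (by omega) (j * m 0 + (d+w) * m (p+1))
            (mem_add (mem_single m j (Nat.zero_le _)) (hEmem (d+w))) ?_
          rw [h3]; ring
      exact hsW ⟨by omega, by omega, by omega, by omega⟩

end Stmt3Aux

/-- Uniqueness of the representation `a·m_0 + g_s + b·m_n` with `(s,b) ∈ V∖W`. -/
theorem stmt3
    (p n : ℕ) (hp : 1 ≤ p) (hn : n = p + 1)
    (m : ℕ → ℕ) (c : ℕ) (hc : 1 ≤ c) (hm0 : 0 < m 0)
    (harith : ∀ i ≤ p, m i = m 0 + i * c) (hmn : 0 < m n)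
    (hgcd : Finset.gcd (Finset.range (n + 1)) m = 1)
    (hminimal : ∀ j ≤ n, ¬ ∃ a : ℕ → ℕ, a j = 0 ∧
        m j = ∑ i ∈ Finset.range (n + 1), a i * m i)
    (S : Set ℕ)
    (hS : S = {γ | γ ∈ gammaGen n m ∧ ∀ δ ∈ gammaGen n m, δ + m 0 ≠ γ})
    (u : ℕ) (hu : IsLeast {t : ℕ | gF p m t ∉ S} u)
    (v : ℕ) (hv : IsLeast {b : ℕ | 1 ≤ b ∧ b * m n ∈ gammaGen p m} v)
    (lam w mu z : ℕ) (hlam : 1 ≤ lam) (hw : w < v) (hz : z < u)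
    (hgu : gF p m u = lam * m 0 + w * m n)
    (hvmn : v * m n = mu * m 0 + gF p m z)
    (V W : Set (ℕ × ℕ))
    (hV : V = {sb | sb.1 < u ∧ sb.2 < v})
    (hW : W = {sb | u - z ≤ sb.1 ∧ sb.1 < u ∧ v - w ≤ sb.2 ∧ sb.2 < v})
    (a a' s t b c' : ℕ)
    (hsb : (s, b) ∈ V \ W) (htc : (t, c') ∈ V \ W)
    (heq : a * m 0 + gF p m s + b * m n = a' * m 0 + gF p m t + c' * m n) :
    a = a' ∧ s = t ∧ b = c' := by
  rcases le_total c' b with h | h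
  · exact Stmt3Aux.main p n hp hn m c hc hm0 harith hmn S hS u hu v hv lam w mu z
      hlam hw hz hgu hvmn V W hV hW a a' s t b c' hsb htc heq h
  · obtain ⟨h1, h2, h3⟩ := Stmt3Aux.main p n hp hn m c hc hm0 harith hmn S hS u hu v hv
      lam w mu z hlam hw hz hgu hvmn V W hV hW a' a t s c' b htc hsb heq.symm h
    exact ⟨h1.symm, h2.symm, h3.symm⟩
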